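/- Let H and H' be simple bipartite graphs on the same finite vertex set, both having the same pair of partite sets X and Y (so that every edge of H and every edge of H' joins a vertex of X to a vertex of Y), and suppose every vertex has the same degree in H as in H'. Then H can be transformed into H' by a finite sequence of 2-switches each of which involves exactly two vertices of X and two vertices of Y; that is, each step deletes two edges x_1y_1 and x_2y_2 (with x_1, x_2 ∈ X distinct and y_1, y_2 ∈ Y distinct, and x_1y_2, x_2y_1 non-edges) and adds the edges x_1y_2 and x_2y_1. In particular, every intermediate graph is bipartite with partite sets X and Y. -/

import Mathlib

/-- The degree of a vertex: the number of its neighbors. -/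
noncomputable def deg {V : Type*} (G : SimpleGraph V) (v : V) : ℕ :=
  (G.neighborSet v).ncard

/-- The graph resulting from deleting the edges `ac` and `bd` of `G` and adding
the edges `ad` and `bc`. -/
def switchedGraph {V : Type*} (G : SimpleGraph V) (a b c d : V) : SimpleGraph V :=
  (G.deleteEdges {s(a, c), s(b, d)}) ⊔ SimpleGraph.fromEdgeSet {s(a, d), s(b, c)}

/-- `H` is obtained from `G` by a 2-switch involving exactly two vertices `x₁, x₂` of
`X` and two vertices `y₁, y₂` of `Y`: the edges `x₁y₁` and `x₂y₂` are deleted and the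
edges `x₁y₂` and `x₂y₁` are added. -/
def BipSwitch {V : Type*} (X Y : Set V) (G H : SimpleGraph V) : Prop :=
  ∃ x₁ x₂ y₁ y₂ : V, x₁ ∈ X ∧ x₂ ∈ X ∧ y₁ ∈ Y ∧ y₂ ∈ Y ∧
    x₁ ≠ x₂ ∧ y₁ ≠ y₂ ∧ x₁ ≠ y₁ ∧ x₁ ≠ y₂ ∧ x₂ ≠ y₁ ∧ x₂ ≠ y₂ ∧
    G.Adj x₁ y₁ ∧ G.Adj x₂ y₂ ∧ ¬ G.Adj x₁ y₂ ∧ ¬ G.Adj x₂ y₁ ∧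
    H = switchedGraph G x₁ x₂ y₁ y₂

section Aux

open SimpleGraph Set

variable {V : Type*}

lemma switched_adj (G : SimpleGraph V) (a b c d u v : V) :
    (switchedGraph G a b c d).Adj u v ↔
      (G.Adj u v ∧ ¬(s(u,v) = s(a,c) ∨ s(u,v) = s(b,d))) ∨
        ((s(u,v) = s(a,d) ∨ s(u,v) = s(b,c)) ∧ u ≠ v) := by
  simp [switchedGraph, SimpleGraph.deleteEdges_adj, SimpleGraph.fromEdgeSet_adj,
    SimpleGraph.sup_adj, Set.mem_insert_iff, Set.mem_singleton_iff]

lemma switched_edgeSet (G : SimpleGraph V) (a b c d : V) (had : a ≠ d) (hbc : b ≠ c) :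
    (switchedGraph G a b c d).edgeSet =
      (G.edgeSet \ {s(a,c), s(b,d)}) ∪ {s(a,d), s(b,c)} := by
  rw [switchedGraph, SimpleGraph.edgeSet_sup, SimpleGraph.edgeSet_deleteEdges,
    SimpleGraph.edgeSet_fromEdgeSet]
  congr 1
  ext e
  simp only [Set.mem_diff, Set.mem_insert_iff, Set.mem_singleton_iff, Set.mem_setOf_eq]
  constructor
  · rintro ⟨h, _⟩; exact h
  · rintro (rfl | rfl)
    · exact ⟨Or.inl rfl, by simp [had]⟩
    · exact ⟨Or.inr rfl, by simp [hbc]⟩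

lemma switch_switch (G : SimpleGraph V) (a b c d : V)
    (hab : a ≠ b) (hcd : c ≠ d) (hac : a ≠ c) (had : a ≠ d) (hbc : b ≠ c) (hbd : b ≠ d)
    (h1 : G.Adj a c) (h2 : G.Adj b d) (h3 : ¬G.Adj a d) (h4 : ¬G.Adj b c) :
    switchedGraph (switchedGraph G a b c d) a b d c = G := by
  rw [← SimpleGraph.edgeSet_inj]
  rw [switched_edgeSet _ a b d c hac hbd, switched_edgeSet _ a b c d had hbc]
  have e1 : s(a,c) ∈ G.edgeSet := G.mem_edgeSet.2 h1
  have e2 : s(b,d) ∈ G.edgeSet := G.mem_edgeSet.2 h2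
  have e3 : s(a,d) ∉ G.edgeSet := fun h => h3 (G.mem_edgeSet.1 h)
  have e4 : s(b,c) ∉ G.edgeSet := fun h => h4 (G.mem_edgeSet.1 h)
  have d13 : s(a,c) ≠ s(a,d) := by simp [Sym2.eq_iff]; tauto
  have d14 : s(a,c) ≠ s(b,c) := by simp [Sym2.eq_iff]; tauto
  have d23 : s(b,d) ≠ s(a,d) := by simp [Sym2.eq_iff]; tauto
  have d24 : s(b,d) ≠ s(b,c) := by simp [Sym2.eq_iff]; tauto
  ext e
  simp only [Set.mem_union, Set.mem_diff, Set.mem_insert_iff, Set.mem_singleton_iff]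
  constructor
  · rintro (⟨(⟨he, hne⟩ | (rfl | rfl)), hnd⟩ | (rfl | rfl)) <;> tauto
  · intro he
    by_cases hA : e = s(a,c)
    · tauto
    · by_cases hB : e = s(b,d)
      · tauto
      · left
        refine ⟨Or.inl ⟨he, fun h => ?_⟩, fun h => ?_⟩ <;>
          rcases h with rfl | rfl <;> tauto

lemma ncard_swap [Fintype V] {s : Set V} {aa bb : V} (ha : aa ∈ s) (hb : bb ∉ s) :
    (insert bb (s \ {aa})).ncard = s.ncard := by
  rw [Set.ncard_insert_of_notMem (fun h => hb h.1) (Set.toFinite _),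
    Set.ncard_diff_singleton_add_one ha (Set.toFinite _)]

lemma switched_nbhd_aux [Fintype V] (G : SimpleGraph V) (x1 x2 y1 y2 : V)
    (hx : x1 ≠ x2) (hy : y1 ≠ y2) (hA : x1 ≠ y2) (hB : x2 ≠ y1)
    (h11 : G.Adj x1 y1) (h22 : G.Adj x2 y2) (h12 : ¬G.Adj x1 y2) (h21 : ¬G.Adj x2 y1) :
    (switchedGraph G x1 x2 y1 y2).neighborSet x1 = insert y2 (G.neighborSet x1 \ {y1}) := by
  have hx1y1 : x1 ≠ y1 := h11.ne
  have hx2y2 : x2 ≠ y2 := h22.ne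
  ext w
  simp only [SimpleGraph.mem_neighborSet, switched_adj, Sym2.eq_iff,
    Set.mem_insert_iff, Set.mem_diff, Set.mem_singleton_iff]
  aesop

lemma switched_comm (G : SimpleGraph V) (a b c d : V) :
    switchedGraph G a b c d = switchedGraph G b a d c := by
  rw [← SimpleGraph.edgeSet_inj]
  rw [switchedGraph, switchedGraph, SimpleGraph.edgeSet_sup, SimpleGraph.edgeSet_sup,
    SimpleGraph.edgeSet_deleteEdges, SimpleGraph.edgeSet_deleteEdges,
    SimpleGraph.edgeSet_fromEdgeSet, SimpleGraph.edgeSet_fromEdgeSet,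
    Set.pair_comm (s(a,c)) (s(b,d)), Set.pair_comm (s(a,d)) (s(b,c))]

lemma switched_swap (G : SimpleGraph V) (a b c d : V) :
    switchedGraph G a b c d = switchedGraph G d c b a := by
  rw [← SimpleGraph.edgeSet_inj]
  rw [switchedGraph, switchedGraph, SimpleGraph.edgeSet_sup, SimpleGraph.edgeSet_sup,
    SimpleGraph.edgeSet_deleteEdges, SimpleGraph.edgeSet_deleteEdges,
    SimpleGraph.edgeSet_fromEdgeSet, SimpleGraph.edgeSet_fromEdgeSet,
    Sym2.eq_swap (a := a) (b := c), Sym2.eq_swap (a := b) (b := d),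
    Sym2.eq_swap (a := a) (b := d), Sym2.eq_swap (a := b) (b := c),
    Set.pair_comm (s(c,a)) (s(d,b))]

lemma deg_switch [Fintype V] (G : SimpleGraph V) (x1 x2 y1 y2 : V)
    (hx : x1 ≠ x2) (hy : y1 ≠ y2) (hA : x1 ≠ y2) (hB : x2 ≠ y1)
    (h11 : G.Adj x1 y1) (h22 : G.Adj x2 y2) (h12 : ¬G.Adj x1 y2) (h21 : ¬G.Adj x2 y1)
    (v : V) : deg (switchedGraph G x1 x2 y1 y2) v = deg G v := by
  have hx1y1 : x1 ≠ y1 := h11.ne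
  have hx2y2 : x2 ≠ y2 := h22.ne
  unfold deg
  by_cases hv1 : v = x1
  · rw [hv1, switched_nbhd_aux G x1 x2 y1 y2 hx hy hA hB h11 h22 h12 h21]
    exact ncard_swap h11 h12
  by_cases hv2 : v = x2
  · rw [hv2, switched_comm, switched_nbhd_aux G x2 x1 y2 y1 hx.symm hy.symm hB hA
      h22 h11 h21 h12]
    exact ncard_swap h22 h21
  by_cases hv3 : v = y1
  · rw [hv3, switched_swap, switched_comm, switched_nbhd_aux G y1 y2 x1 x2 hy hx
      (Ne.symm hB) (Ne.symm hA)
      h11.symm h22.symm (fun h => h21 h.symm) (fun h => h12 h.symm)]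
    exact ncard_swap h11.symm (fun h => h21 h.symm)
  by_cases hv4 : v = y2
  · rw [hv4, switched_swap, switched_nbhd_aux G y2 y1 x2 x1 hy.symm hx.symm
      (Ne.symm hA) (Ne.symm hB) h22.symm h11.symm (fun h => h12 h.symm) (fun h => h21 h.symm)]
    exact ncard_swap h22.symm (fun h => h12 h.symm)
  have hset : (switchedGraph G x1 x2 y1 y2).neighborSet v = G.neighborSet v := by
    ext w
    simp only [SimpleGraph.mem_neighborSet, switched_adj, Sym2.eq_iff]
    aesop
  rw [hset]

/-- symmetric difference of edge sets -/
def eDiff (G G' : SimpleGraph V) : Set (Sym2 V) :=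
  (G.edgeSet \ G'.edgeSet) ∪ (G'.edgeSet \ G.edgeSet)

lemma eDiff_comm (G G' : SimpleGraph V) : eDiff G G' = eDiff G' G :=
  Set.union_comm _ _

lemma bip_switched {X Y : Set V} (G : SimpleGraph V)
    (hG : ∀ u w, G.Adj u w → (u ∈ X ∧ w ∈ Y) ∨ (u ∈ Y ∧ w ∈ X))
    (x1 x2 y1 y2 : V) (hx1 : x1 ∈ X) (hx2 : x2 ∈ X) (hy1 : y1 ∈ Y) (hy2 : y2 ∈ Y) :
    ∀ u w, (switchedGraph G x1 x2 y1 y2).Adj u w →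
      (u ∈ X ∧ w ∈ Y) ∨ (u ∈ Y ∧ w ∈ X) := by
  intro u w h
  rw [switched_adj] at h
  rcases h with ⟨hadj, -⟩ | ⟨h, -⟩
  · exact hG u w hadj
  · rcases h with h | h <;> rw [Sym2.eq_iff] at h <;>
      rcases h with ⟨rfl, rfl⟩ | ⟨rfl, rfl⟩ <;> tauto

lemma balance [Fintype V] {H H' : SimpleGraph V} {v : V} (hdeg : deg H v = deg H' v) :
    (H.neighborSet v \ H'.neighborSet v).ncard
      = (H'.neighborSet v \ H.neighborSet v).ncard := by
  have h1 := Set.ncard_inter_add_ncard_diff_eq_ncard (H.neighborSet v) (H'.neighborSet v)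
    (Set.toFinite _)
  have h2 := Set.ncard_inter_add_ncard_diff_eq_ncard (H'.neighborSet v) (H.neighborSet v)
    (Set.toFinite _)
  rw [Set.inter_comm] at h2
  unfold deg at hdeg
  omega

lemma delta_lt [Fintype V] (G G' : SimpleGraph V) (a b c d : V)
    (hab : a ≠ b) (hcd : c ≠ d) (hac : a ≠ c) (had : a ≠ d) (hbc : b ≠ c) (hbd : b ≠ d)
    (h1 : G.Adj a c) (h2 : G.Adj b d) (h3 : ¬G.Adj a d) (h4 : ¬G.Adj b c)
    (g1 : ¬G'.Adj a c) (g4 : G'.Adj b c)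
    (g24 : ¬G'.Adj b d ∨ G'.Adj a d) :
    (eDiff (switchedGraph G a b c d) G').ncard < (eDiff G G').ncard := by
  set e1 : Sym2 V := s(a,c) with he1
  set e2 : Sym2 V := s(b,d) with he2
  set e3 : Sym2 V := s(b,c) with he3
  set e4 : Sym2 V := s(a,d) with he4
  have d13 : e1 ≠ e3 := by simp [he1, he3, Sym2.eq_iff]; tauto
  have hd1 : e1 ∈ eDiff G G' := Or.inl ⟨G.mem_edgeSet.2 h1, fun h => g1 (G'.mem_edgeSet.1 h)⟩
  have hd3 : e3 ∈ eDiff G G' := Or.inr ⟨G'.mem_edgeSet.2 g4, fun h => h4 (G.mem_edgeSet.1 h)⟩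
  have hpair : ({e1, e3} : Set (Sym2 V)) ⊆ eDiff G G' := by
    rintro e (rfl | rfl)
    · exact hd1
    · exact hd3
  -- the new edge set
  have hE : (switchedGraph G a b c d).edgeSet = (G.edgeSet \ {e1, e2}) ∪ {e4, e3} :=
    switched_edgeSet G a b c d had hbc
  obtain ⟨estar, hsub⟩ :
      ∃ estar, eDiff (switchedGraph G a b c d) G' ⊆ insert estar (eDiff G G' \ {e1, e3}) := by
    have d12 : e1 ≠ e2 := by simp [he1, he2, Sym2.eq_iff]; tauto
    have d14 : e1 ≠ e4 := by simp [he1, he4, Sym2.eq_iff]; tauto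
    have d23 : e2 ≠ e3 := by simp [he2, he3, Sym2.eq_iff]; tauto
    have d24 : e2 ≠ e4 := by simp [he2, he4, Sym2.eq_iff]; tauto
    have d34 : e3 ≠ e4 := by simp [he3, he4, Sym2.eq_iff]; tauto
    have hmem : ∀ e, e ∈ (switchedGraph G a b c d).edgeSet ↔
        ((e ∈ G.edgeSet ∧ ¬(e = e1 ∨ e = e2)) ∨ (e = e4 ∨ e = e3)) := by
      intro e
      rw [hE]
      simp only [Set.mem_union, Set.mem_diff, Set.mem_insert_iff, Set.mem_singleton_iff]
    rcases g24 with g2 | g4'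
    · -- unknown corner is e4
      refine ⟨e4, fun e he => ?_⟩
      by_cases h4e : e = e4
      · exact Or.inl h4e
      rcases he with ⟨heS, heG'⟩ | ⟨heG', heS⟩
      · rw [hmem] at heS
        rcases heS with ⟨heG, hne⟩ | (rfl | rfl)
        · refine Or.inr ⟨Or.inl ⟨heG, heG'⟩, ?_⟩
          rintro (rfl | rfl)
          · exact hne (Or.inl rfl)
          · exact heG' (G'.mem_edgeSet.2 g4)
        · exact absurd rfl h4e
        · exact absurd (G'.mem_edgeSet.2 g4) heG'
      · rw [hmem] at heS
        push_neg at heS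
        obtain ⟨hor, hne4, hne3⟩ := heS
        have heG : e ∉ G.edgeSet := by
          intro hg
          rcases hor hg with rfl | rfl
          · exact g1 (G'.mem_edgeSet.1 heG')
          · exact g2 (G'.mem_edgeSet.1 heG')
        refine Or.inr ⟨Or.inr ⟨heG', heG⟩, ?_⟩
        rintro (rfl | rfl)
        · exact heG (G.mem_edgeSet.2 h1)
        · exact hne3 rfl
    · -- unknown corner is e2
      refine ⟨e2, fun e he => ?_⟩
      by_cases h2e : e = e2
      · exact Or.inl h2e
      rcases he with ⟨heS, heG'⟩ | ⟨heG', heS⟩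
      · rw [hmem] at heS
        rcases heS with ⟨heG, hne⟩ | (rfl | rfl)
        · refine Or.inr ⟨Or.inl ⟨heG, heG'⟩, ?_⟩
          rintro (rfl | rfl)
          · exact hne (Or.inl rfl)
          · exact heG' (G'.mem_edgeSet.2 g4)
        · exact absurd (G'.mem_edgeSet.2 g4') heG'
        · exact absurd (G'.mem_edgeSet.2 g4) heG'
      · rw [hmem] at heS
        push_neg at heS
        obtain ⟨hor, hne4, hne3⟩ := heS
        have heG : e ∉ G.edgeSet := by
          intro hg
          rcases hor hg with rfl | rfl
          · exact g1 (G'.mem_edgeSet.1 heG')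
          · exact h2e rfl
        refine Or.inr ⟨Or.inr ⟨heG', heG⟩, ?_⟩
        rintro (rfl | rfl)
        · exact heG (G.mem_edgeSet.2 h1)
        · exact hne3 rfl
  have hfin : (eDiff G G').Finite := Set.toFinite _
  have hcard1 : (eDiff (switchedGraph G a b c d) G').ncard
      ≤ (eDiff G G' \ {e1, e3}).ncard + 1 := by
    calc (eDiff (switchedGraph G a b c d) G').ncard
        ≤ (insert estar (eDiff G G' \ {e1, e3})).ncard :=
          Set.ncard_le_ncard hsub (Set.toFinite _)
      _ ≤ (eDiff G G' \ {e1, e3}).ncard + 1 := Set.ncard_insert_le _ _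
  have hcard2 : (eDiff G G' \ {e1, e3}).ncard = (eDiff G G').ncard - 2 := by
    rw [Set.ncard_diff hpair (Set.toFinite _), Set.ncard_pair d13]
  have hcard3 : 2 ≤ (eDiff G G').ncard := by
    rw [← Set.ncard_pair d13]
    exact Set.ncard_le_ncard hpair hfin
  omega

lemma bipSwitch'_symm {X Y : Set V} {G G' : SimpleGraph V} (h : BipSwitch X Y G G') :
    BipSwitch X Y G' G := by
  obtain ⟨x1, x2, y1, y2, hx1, hx2, hy1, hy2, hxx, hyy, h11, h12, h21, h22,
    a11, a22, na12, na21, rfl⟩ := h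
  have hxx' := hxx.symm
  have hyy' := hyy.symm
  have h11' := h11.symm
  have h12' := h12.symm
  have h21' := h21.symm
  have h22' := h22.symm
  refine ⟨x1, x2, y2, y1, hx1, hx2, hy2, hy1, hxx, hyy.symm, h12, h11, h22, h21,
    ?_, ?_, ?_, ?_, ?_⟩
  · rw [switched_adj]; right; exact ⟨Or.inl rfl, h12⟩
  · rw [switched_adj]; right; exact ⟨Or.inr rfl, h21⟩
  · rw [switched_adj]
    rintro (⟨-, hne⟩ | ⟨h, -⟩)
    · exact hne (Or.inl rfl)
    · rcases h with h | h <;> rw [Sym2.eq_iff] at h <;> tauto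
  · rw [switched_adj]
    rintro (⟨-, hne⟩ | ⟨h, -⟩)
    · exact hne (Or.inr rfl)
    · rcases h with h | h <;> rw [Sym2.eq_iff] at h <;> tauto
  · exact (switch_switch G x1 x2 y1 y2 hxx hyy h11 h12 h21 h22 a11 a22 na12 na21).symm

lemma key_step [Fintype V] (X Y : Set V) (hdisj : Disjoint X Y)
    (H H' : SimpleGraph V)
    (hH : ∀ u w, H.Adj u w → (u ∈ X ∧ w ∈ Y) ∨ (u ∈ Y ∧ w ∈ X))
    (hH' : ∀ u w, H'.Adj u w → (u ∈ X ∧ w ∈ Y) ∨ (u ∈ Y ∧ w ∈ X))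
    (hdeg : ∀ v, deg H v = deg H' v) (hne : H ≠ H') :
    ∃ x1 x2 y1 y2 : V, x1 ∈ X ∧ x2 ∈ X ∧ y1 ∈ Y ∧ y2 ∈ Y ∧ x1 ≠ x2 ∧ y1 ≠ y2 ∧
      H.Adj x1 y1 ∧ ¬H'.Adj x1 y1 ∧ H.Adj x2 y2 ∧ ¬H'.Adj x2 y2 ∧
      H'.Adj x2 y1 ∧ ¬H.Adj x2 y1 ∧ (¬H.Adj x1 y2 ∨ H'.Adj x1 y2) := by
  classical
  have hXY : ∀ {x y : V}, x ∈ X → y ∈ Y → x ≠ y := by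
    intro x y hx hy h
    exact Set.disjoint_left.1 hdisj hx (h ▸ hy)
  set f : V → ℕ := fun x => (H.neighborSet x \ H'.neighborSet x).ncard with hf
  set S : Set V := {x | x ∈ X ∧ ∃ y, H'.Adj x y ∧ ¬H.Adj x y} with hS
  -- blue edge gives an element of S
  have blueS : ∀ u w, H'.Adj u w → ¬H.Adj u w → S.Nonempty := by
    intro u w hb hnb
    rcases hH' u w hb with ⟨hu, hw⟩ | ⟨hu, hw⟩
    · exact ⟨u, hu, w, hb, hnb⟩
    · exact ⟨w, hw, u, hb.symm, fun h => hnb h.symm⟩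
  -- some blue edge exists
  have hSne : S.Nonempty := by
    have hdiff : ∃ u w, (H.Adj u w ∧ ¬H'.Adj u w) ∨ (H'.Adj u w ∧ ¬H.Adj u w) := by
      by_contra hc
      push_neg at hc
      apply hne
      ext u w
      have := hc u w
      tauto
    obtain ⟨u, w, hc⟩ := hdiff
    rcases hc with ⟨ha, hna⟩ | ⟨ha, hna⟩
    · -- red edge at u; get a blue edge at u by balance
      have hw : w ∈ H.neighborSet u \ H'.neighborSet u := ⟨ha, hna⟩
      have h1 : (H.neighborSet u \ H'.neighborSet u).ncard ≠ 0 := by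
        intro h0
        rw [Set.ncard_eq_zero (Set.toFinite _)] at h0
        exact absurd h0 (Set.nonempty_iff_ne_empty.1 ⟨w, hw⟩)
      have h2 : (H'.neighborSet u \ H.neighborSet u).ncard ≠ 0 := by
        rw [← balance (hdeg u)]; exact h1
      obtain ⟨w', hw'⟩ := Set.nonempty_of_ncard_ne_zero h2
      exact blueS u w' hw'.1 hw'.2
    · exact blueS u w ha hna
  obtain ⟨x2, hx2S, hmax⟩ := Set.Finite.exists_maximalFor f S (Set.toFinite _) hSne
  obtain ⟨hx2X, y1, hb1, hnb1⟩ := hx2S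
  have hy1Y : y1 ∈ Y := by
    rcases hH' x2 y1 hb1 with ⟨-, h⟩ | ⟨h, -⟩
    · exact h
    · exact absurd rfl (hXY hx2X h)
  -- red edge at y1
  have hx2mem : x2 ∈ H'.neighborSet y1 \ H.neighborSet y1 :=
    ⟨hb1.symm, fun h => hnb1 h.symm⟩
  have hy1red : (H.neighborSet y1 \ H'.neighborSet y1).ncard ≠ 0 := by
    rw [balance (hdeg y1)]
    intro h0
    rw [Set.ncard_eq_zero (Set.toFinite _)] at h0
    exact absurd h0 (Set.nonempty_iff_ne_empty.1 ⟨x2, hx2mem⟩)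
  obtain ⟨x1, hx1r⟩ := Set.nonempty_of_ncard_ne_zero hy1red
  have h11 : H.Adj x1 y1 := hx1r.1.symm
  have hn11 : ¬H'.Adj x1 y1 := fun h => hx1r.2 h.symm
  have hx1X : x1 ∈ X := by
    rcases hH x1 y1 h11 with ⟨h, -⟩ | ⟨-, h⟩
    · exact h
    · exact absurd rfl (hXY h hy1Y)
  have hx12 : x1 ≠ x2 := fun h => hnb1 (h ▸ h11)
  -- find y2
  have hy2ex : ∃ y2, (H.Adj x2 y2 ∧ ¬H'.Adj x2 y2) ∧ (¬H.Adj x1 y2 ∨ H'.Adj x1 y2) := by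
    by_contra hc
    push_neg at hc
    have hsub : insert y1 (H.neighborSet x2 \ H'.neighborSet x2)
        ⊆ H.neighborSet x1 \ H'.neighborSet x1 := by
      rintro y (rfl | ⟨hy1, hy2⟩)
      · exact ⟨h11, hn11⟩
      · exact hc y ⟨hy1, hy2⟩
    have hy1notin : y1 ∉ H.neighborSet x2 \ H'.neighborSet x2 := fun h => hnb1 h.1
    have hle : f x2 + 1 ≤ f x1 := by
      have h1 : (insert y1 (H.neighborSet x2 \ H'.neighborSet x2)).ncard
          = f x2 + 1 := Set.ncard_insert_of_notMem hy1notin (Set.toFinite _)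
      have h2 := Set.ncard_le_ncard hsub (Set.toFinite _)
      rw [h1] at h2
      exact h2
    have hx1S : x1 ∈ S := by
      have hfx1 : (H'.neighborSet x1 \ H.neighborSet x1).ncard ≠ 0 := by
        rw [← balance (hdeg x1)]
        exact (show f x1 ≠ 0 by omega)
      obtain ⟨y3, hy3⟩ := Set.nonempty_of_ncard_ne_zero hfx1
      exact ⟨hx1X, y3, hy3.1, hy3.2⟩
    have h3 : f x2 ≤ f x1 := by omega
    have h4 : f x2 = f x1 := le_antisymm h3 (hmax hx1S h3)
    omega
  obtain ⟨y2, ⟨h22, hn22⟩, hlast⟩ := hy2ex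
  have hy2Y : y2 ∈ Y := by
    rcases hH x2 y2 h22 with ⟨-, h⟩ | ⟨h, -⟩
    · exact h
    · exact absurd rfl (hXY hx2X h)
  have hy12 : y1 ≠ y2 := fun h => hnb1 (h ▸ h22)
  exact ⟨x1, x2, y1, y2, hx1X, hx2X, hy1Y, hy2Y, hx12, hy12, h11, hn11, h22, hn22,
    hb1, hnb1, hlast⟩


end Aux

/-- Two bipartitioned graphs with the same partite sets `X`, `Y` and the same degrees
at every vertex can be transformed into one another by a finite sequence of
2-switches each involving two vertices of `X` and two vertices of `Y`; in particular,
every intermediate graph is bipartite with partite sets `X` and `Y`. -/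
theorem stmt8 {V : Type*} [Fintype V] (X Y : Set V)
    (hdisj : Disjoint X Y) (hunion : X ∪ Y = Set.univ)
    (H H' : SimpleGraph V)
    (hH : ∀ u w, H.Adj u w → (u ∈ X ∧ w ∈ Y) ∨ (u ∈ Y ∧ w ∈ X))
    (hH' : ∀ u w, H'.Adj u w → (u ∈ X ∧ w ∈ Y) ∨ (u ∈ Y ∧ w ∈ X))
    (hdeg : ∀ v, deg H v = deg H' v) :
    Relation.ReflTransGen (BipSwitch X Y) H H' := by

  classical
  have hXY : ∀ {x y : V}, x ∈ X → y ∈ Y → x ≠ y := by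
    intro x y hx hy h
    exact Set.disjoint_left.1 hdisj hx (h ▸ hy)
  suffices hmain : ∀ n (H H' : SimpleGraph V),
      (∀ u w, H.Adj u w → (u ∈ X ∧ w ∈ Y) ∨ (u ∈ Y ∧ w ∈ X)) →
      (∀ u w, H'.Adj u w → (u ∈ X ∧ w ∈ Y) ∨ (u ∈ Y ∧ w ∈ X)) →
      (∀ v, deg H v = deg H' v) → (eDiff H H').ncard = n →
      Relation.ReflTransGen (BipSwitch X Y) H H' by
    exact hmain _ H H' hH hH' hdeg rfl
  intro n
  induction n using Nat.strong_induction_on with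
  | _ n ih =>
    intro H H' hH hH' hdeg hcard
    by_cases hne : H = H'
    · exact hne ▸ Relation.ReflTransGen.refl
    obtain ⟨x1, x2, y1, y2, hx1X, hx2X, hy1Y, hy2Y, hx12, hy12, h11, hn11, h22, hn22,
      hb21, hnb21, hlast⟩ := key_step X Y hdisj H H' hH hH' hdeg hne
    have hA : x1 ≠ y2 := hXY hx1X hy2Y
    have hB : x2 ≠ y1 := hXY hx2X hy1Y
    have hC : x1 ≠ y1 := hXY hx1X hy1Y
    have hD : x2 ≠ y2 := hXY hx2X hy2Y
    by_cases h12 : H.Adj x1 y2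
    · -- case B : switch on H'
      have hb12 : H'.Adj x1 y2 := by tauto
      set H2 := switchedGraph H' x2 x1 y1 y2 with hH2
      have step : BipSwitch X Y H' H2 :=
        ⟨x2, x1, y1, y2, hx2X, hx1X, hy1Y, hy2Y, hx12.symm, hy12, hB, hD, hC, hA,
          hb21, hb12, hn22, hn11, rfl⟩
      have hlt : (eDiff H H2).ncard < n := by
        rw [← hcard, eDiff_comm H H2, eDiff_comm H H']
        exact delta_lt H' H x2 x1 y1 y2 hx12.symm hy12 hB hD hC hA
          hb21 hb12 hn22 hn11 hnb21 h11 (Or.inr h22)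
      have hH2bip := bip_switched H' hH' x2 x1 y1 y2 hx2X hx1X hy1Y hy2Y
      have hdeg2 : ∀ v, deg H v = deg H2 v := fun v =>
        (hdeg v).trans (deg_switch H' x2 x1 y1 y2 hx12.symm hy12 hD hC
          hb21 hb12 hn22 hn11 v).symm
      have ihs := ih _ hlt H H2 hH hH2bip hdeg2 rfl
      exact ihs.tail (bipSwitch'_symm step)
    · -- case A : switch on H
      set H2 := switchedGraph H x1 x2 y1 y2 with hH2
      have step : BipSwitch X Y H H2 :=
        ⟨x1, x2, y1, y2, hx1X, hx2X, hy1Y, hy2Y, hx12, hy12, hC, hA, hB, hD,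
          h11, h22, h12, hnb21, rfl⟩
      have hlt : (eDiff H2 H').ncard < n := by
        rw [← hcard]
        exact delta_lt H H' x1 x2 y1 y2 hx12 hy12 hC hA hB hD
          h11 h22 h12 hnb21 hn11 hb21 (Or.inl hn22)
      have hH2bip := bip_switched H hH x1 x2 y1 y2 hx1X hx2X hy1Y hy2Y
      have hdeg2 : ∀ v, deg H2 v = deg H' v := fun v =>
        (deg_switch H x1 x2 y1 y2 hx12 hy12 hA hB h11 h22 h12 hnb21 v).trans (hdeg v)
      exact (ih _ hlt H2 H' hH2bip hH' hdeg2 rfl).head step
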